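/- Let (𝕋, μ) be a probability space, 2 < p < 3, K ≥ 1, and f measurable with ‖f‖_{Γ_K} = 1. Define f₁ = f·1_{\{|f/2| < K\}} and f₂ = f·1_{\{|f/2| ≥ K\}}. Then ‖f₁‖_{L^p} ≤ 2 and ‖f₂‖_{L²}² ≤ 4·K^{2−p}. -/

import Mathlib

open MeasureTheory
open scoped ENNReal NNReal

private noncomputable def Gfun (p K t : ℝ) : ℝ :=
  if |t| ≤ K then |t| ^ p
    else (1 + (p - 2) / 2) * K ^ (p - 2) * t ^ 2 - (p - 2) / 2 * K ^ p

private lemma GKK {p K : ℝ} (hK : 1 ≤ K) : K ^ (p - 2) * K ^ 2 = K ^ p := by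
  have hK0 : (0:ℝ) < K := lt_of_lt_of_le one_pos hK
  rw [← Real.rpow_natCast K 2, ← Real.rpow_add hK0]
  norm_num

private lemma G_mono {p K : ℝ} (hp1 : 2 < p) (hK : 1 ≤ K) {s t : ℝ} (h : |s| ≤ |t|) :
    Gfun p K s ≤ Gfun p K t := by
  have hK0 : (0:ℝ) < K := lt_of_lt_of_le one_pos hK
  have hp0 : (0:ℝ) < p := by linarith
  have hKp2 : (0:ℝ) < K ^ (p - 2) := Real.rpow_pos_of_pos hK0 _
  have hKp : (0:ℝ) < K ^ p := Real.rpow_pos_of_pos hK0 _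
  have hKK := GKK (p := p) hK
  unfold Gfun
  rcases le_or_gt |t| K with ht | ht
  · rw [if_pos ht, if_pos (h.trans ht)]
    exact Real.rpow_le_rpow (abs_nonneg _) h hp0.le
  · rw [if_neg (not_le.mpr ht)]
    have ht2 : K ^ 2 ≤ t ^ 2 := by
      rw [← sq_abs t]; exact pow_le_pow_left₀ hK0.le ht.le 2
    have hbase : K ^ p ≤ (1 + (p - 2) / 2) * K ^ (p - 2) * t ^ 2 - (p - 2) / 2 * K ^ p := by
      nlinarith [mul_le_mul_of_nonneg_left ht2 hKp2.le]
    rcases le_or_gt |s| K with hs | hs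
    · rw [if_pos hs]
      have : |s| ^ p ≤ K ^ p := Real.rpow_le_rpow (abs_nonneg _) hs hp0.le
      linarith
    · rw [if_neg (not_le.mpr hs)]
      have hs2 : s ^ 2 ≤ t ^ 2 := by
        rw [← sq_abs s, ← sq_abs t]; exact pow_le_pow_left₀ (abs_nonneg _) h 2
      nlinarith [mul_le_mul_of_nonneg_left (mul_le_mul_of_nonneg_left hs2 hKp2.le)
        (by linarith : (0:ℝ) ≤ 1 + (p - 2) / 2)]

private lemma G_nonneg {p K : ℝ} (hp1 : 2 < p) (hK : 1 ≤ K) (t : ℝ) :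
    0 ≤ Gfun p K t := by
  have h0 : Gfun p K 0 = 0 := by
    have hK0 : (0:ℝ) ≤ K := le_trans zero_le_one hK
    simp only [Gfun, abs_zero, if_pos hK0]
    exact Real.zero_rpow (by linarith)
  rw [← h0]
  exact G_mono hp1 hK (by simp)

private lemma G_le {p K : ℝ} (hp1 : 2 < p) (hK : 1 ≤ K) (t : ℝ) :
    Gfun p K t ≤ (1 + (p - 2) / 2) * K ^ (p - 2) * t ^ 2 + K ^ p := by
  have hK0 : (0:ℝ) < K := lt_of_lt_of_le one_pos hK
  have hp0 : (0:ℝ) < p := by linarith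
  have hKp2 : (0:ℝ) < K ^ (p - 2) := Real.rpow_pos_of_pos hK0 _
  have hKp : (0:ℝ) < K ^ p := Real.rpow_pos_of_pos hK0 _
  unfold Gfun
  rcases le_or_gt |t| K with ht | ht
  · rw [if_pos ht]
    have h1 : |t| ^ p ≤ K ^ p := Real.rpow_le_rpow (abs_nonneg _) ht hp0.le
    nlinarith [sq_nonneg t, mul_nonneg (by linarith : (0:ℝ) ≤ 1 + (p-2)/2) hKp2.le]
  · rw [if_neg (not_le.mpr ht)]
    nlinarith

private lemma G_ge {p K : ℝ} (hp1 : 2 < p) (hK : 1 ≤ K) (t : ℝ) :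
    (1 + (p - 2) / 2) * K ^ (p - 2) * t ^ 2 - (1 + (p - 2) / 2) * K ^ p ≤ Gfun p K t := by
  have hK0 : (0:ℝ) < K := lt_of_lt_of_le one_pos hK
  have hKp2 : (0:ℝ) < K ^ (p - 2) := Real.rpow_pos_of_pos hK0 _
  have hKp : (0:ℝ) < K ^ p := Real.rpow_pos_of_pos hK0 _
  have hKK := GKK (p := p) hK
  unfold Gfun
  rcases le_or_gt |t| K with ht | ht
  · rw [if_pos ht]
    have ht2 : t ^ 2 ≤ K ^ 2 := by
      rw [← sq_abs t]; exact pow_le_pow_left₀ (abs_nonneg _) ht 2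
    have h1 : (0:ℝ) ≤ |t| ^ p := Real.rpow_nonneg (abs_nonneg _) _
    nlinarith [mul_le_mul_of_nonneg_left ht2 hKp2.le]
  · rw [if_neg (not_le.mpr ht)]
    nlinarith

private lemma G_quad {p K : ℝ} (hp1 : 2 < p) (hK : 1 ≤ K) {t : ℝ} (h : K ≤ |t|) :
    K ^ (p - 2) * t ^ 2 ≤ Gfun p K t := by
  have hK0 : (0:ℝ) < K := lt_of_lt_of_le one_pos hK
  have hKp2 : (0:ℝ) < K ^ (p - 2) := Real.rpow_pos_of_pos hK0 _
  have hKK := GKK (p := p) hK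
  unfold Gfun
  rcases le_or_gt |t| K with ht | ht
  · rw [if_pos ht]
    have heq : |t| = K := le_antisymm ht h
    have : t ^ 2 = K ^ 2 := by rw [← sq_abs t, heq]
    rw [this, hKK, ← heq]
  · rw [if_neg (not_le.mpr ht)]
    have ht2 : K ^ 2 ≤ t ^ 2 := by
      rw [← sq_abs t]; exact pow_le_pow_left₀ hK0.le ht.le 2
    nlinarith [mul_le_mul_of_nonneg_left ht2 hKp2.le]

private lemma G_meas (p K : ℝ) (hp0 : 0 ≤ p) : Measurable (Gfun p K) := by
  unfold Gfun
  apply Measurable.ite (measurableSet_le measurable_abs measurable_const)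
  · exact (continuous_abs.rpow_const fun x => Or.inr hp0).measurable
  · fun_prop

theorem stmt11 {α : Type*} [MeasurableSpace α] (μ : Measure α)
    [IsProbabilityMeasure μ]
    (p K : ℝ) (hp1 : 2 < p) (hp2 : p < 3) (hK : 1 ≤ K)
    (Γ : ℝ → ℝ)
    (hΓ : ∀ t, Γ t = if |t| ≤ K then |t| ^ p
      else (1 + (p - 2) / 2) * K ^ (p - 2) * t ^ 2 - (p - 2) / 2 * K ^ p)
    (f : α → ℝ) (hmeas : Measurable f)
    (hnorm : sInf {lam : ℝ | 0 < lam ∧ ∫ x, Γ (f x / lam) ∂μ ≤ 1} = 1) :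
    eLpNorm (fun x => if |f x / 2| < K then f x else 0) (ENNReal.ofReal p) μ ≤ 2 ∧
    ∫ x, (if K ≤ |f x / 2| then f x else 0) ^ 2 ∂μ ≤ 4 * K ^ (2 - p) := by
  have hK0 : (0:ℝ) < K := lt_of_lt_of_le one_pos hK
  have hp0 : (0:ℝ) < p := by linarith
  have hKp2 : (0:ℝ) < K ^ (p - 2) := Real.rpow_pos_of_pos hK0 _
  have hKp : (0:ℝ) < K ^ p := Real.rpow_pos_of_pos hK0 _
  have hK2p : (0:ℝ) < K ^ (2 - p) := Real.rpow_pos_of_pos hK0 _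
  have hKinv : K ^ (2 - p) * K ^ (p - 2) = 1 := by
    rw [← Real.rpow_add hK0]; norm_num
  have hG : ∀ t, Γ t = Gfun p K t := hΓ
  -- dichotomy on integrability of f²
  by_cases hf2 : Integrable (fun x => (f x) ^ 2) μ
  · -- the main case
    have hΓint : ∀ lam : ℝ, 0 < lam → Integrable (fun x => Γ (f x / lam)) μ := by
      intro lam hlam
      have hm : Measurable fun x => Gfun p K (f x / lam) :=
        (G_meas p K hp0.le).comp (hmeas.div_const lam)
      have hgint : Integrable
          (fun x => (1 + (p - 2) / 2) * K ^ (p - 2) / lam ^ 2 * (f x) ^ 2 + K ^ p) μ :=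
        (hf2.const_mul _).add (integrable_const _)
      have : Integrable (fun x => Gfun p K (f x / lam)) μ := by
        apply hgint.mono' hm.aestronglyMeasurable
        filter_upwards with x
        rw [Real.norm_eq_abs, abs_of_nonneg (G_nonneg hp1 hK _)]
        have := G_le hp1 hK (f x / lam)
        have hdv : (f x / lam) ^ 2 = (f x) ^ 2 / lam ^ 2 := div_pow _ _ _
        rw [hdv] at this
        have hl2 : (0:ℝ) < lam ^ 2 := by positivity
        calc Gfun p K (f x / lam)
            ≤ (1 + (p - 2) / 2) * K ^ (p - 2) * ((f x) ^ 2 / lam ^ 2) + K ^ p := this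
          _ = (1 + (p - 2) / 2) * K ^ (p - 2) / lam ^ 2 * (f x) ^ 2 + K ^ p := by ring
      simpa only [hG] using this
    -- find lam0 in the set with lam0 < 2
    have hne : Set.Nonempty {lam : ℝ | 0 < lam ∧ ∫ x, Γ (f x / lam) ∂μ ≤ 1} := by
      by_contra h
      rw [Set.not_nonempty_iff_eq_empty] at h
      rw [h, Real.sInf_empty] at hnorm
      norm_num at hnorm
    obtain ⟨lam0, hlam0S, hlam0lt⟩ :
        ∃ lam0 ∈ {lam : ℝ | 0 < lam ∧ ∫ x, Γ (f x / lam) ∂μ ≤ 1}, lam0 < 2 := by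
      obtain ⟨a, haS, ha⟩ := Real.lt_sInf_add_pos hne one_pos
      rw [hnorm] at ha
      exact ⟨a, haS, by linarith⟩
    obtain ⟨hlam0pos, hlam0int⟩ := hlam0S
    -- ∫ Γ(f/2) ≤ 1
    have hmono : ∀ x, Gfun p K (f x / 2) ≤ Gfun p K (f x / lam0) := by
      intro x
      apply G_mono hp1 hK
      rw [abs_div, abs_div, abs_of_pos (show (0:ℝ) < 2 by norm_num), abs_of_pos hlam0pos]
      gcongr
    have hI1 : ∫ x, Γ (f x / 2) ∂μ ≤ 1 := by
      refine le_trans (integral_mono (hΓint 2 two_pos) (hΓint lam0 hlam0pos) ?_) hlam0int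
      intro x
      simp only [hG]
      exact hmono x
    have hGint2 : Integrable (fun x => Gfun p K (f x / 2)) μ := by
      simpa only [hG] using hΓint 2 two_pos
    have hI1' : ∫ x, Gfun p K (f x / 2) ∂μ ≤ 1 := by
      simpa only [hG] using hI1
    have hInn : 0 ≤ ∫ x, Gfun p K (f x / 2) ∂μ :=
      integral_nonneg fun x => G_nonneg hp1 hK _
    constructor
    · -- eLpNorm bound
      have hpne : ENNReal.ofReal p ≠ 0 := by
        simp [ENNReal.ofReal_eq_zero, not_le, hp0]
      have hptop : ENNReal.ofReal p ≠ ⊤ := ENNReal.ofReal_ne_top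
      rw [eLpNorm_eq_lintegral_rpow_enorm_toReal hpne hptop, ENNReal.toReal_ofReal hp0.le]
      have hpoint : ∀ x, (‖(if |f x / 2| < K then f x else 0)‖₊ : ℝ≥0∞) ^ p
          ≤ ENNReal.ofReal (2 ^ p * Gfun p K (f x / 2)) := by
        intro x
        split_ifs with h
        · have h1 : (‖f x‖₊ : ℝ≥0∞) ^ p = ENNReal.ofReal (|f x| ^ p) := by
            rw [← enorm_eq_nnnorm, Real.enorm_eq_ofReal_abs,
              ENNReal.ofReal_rpow_of_nonneg (abs_nonneg _) hp0.le]
          rw [h1]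
          apply ENNReal.ofReal_le_ofReal
          have habs : |f x| = 2 * |f x / 2| := by
            rw [abs_div, abs_two]
            ring
          rw [habs, Real.mul_rpow (by norm_num) (abs_nonneg _)]
          have : |f x / 2| ^ p = Gfun p K (f x / 2) := by
            unfold Gfun
            rw [if_pos h.le]
          rw [this]
        · simp only [nnnorm_zero, ENNReal.coe_zero]
          rw [ENNReal.zero_rpow_of_pos hp0]
          exact zero_le'
      have h2p : (0:ℝ) < 2 ^ p := Real.rpow_pos_of_pos two_pos _
      calc (∫⁻ x, (‖(if |f x / 2| < K then f x else 0)‖₊ : ℝ≥0∞) ^ p ∂μ) ^ (1 / p)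
          ≤ (∫⁻ x, ENNReal.ofReal (2 ^ p * Gfun p K (f x / 2)) ∂μ) ^ (1 / p) := by
            apply ENNReal.rpow_le_rpow (lintegral_mono fun x => hpoint x) (by positivity)
        _ = (ENNReal.ofReal (∫ x, 2 ^ p * Gfun p K (f x / 2) ∂μ)) ^ (1 / p) := by
            rw [MeasureTheory.ofReal_integral_eq_lintegral_ofReal (hGint2.const_mul _)
              (Filter.Eventually.of_forall fun x =>
                mul_nonneg h2p.le (G_nonneg hp1 hK _))]
        _ ≤ (ENNReal.ofReal (2 ^ p)) ^ (1 / p) := by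
            apply ENNReal.rpow_le_rpow _ (by positivity)
            apply ENNReal.ofReal_le_ofReal
            rw [integral_const_mul]
            nlinarith
        _ = 2 := by
            rw [← ENNReal.ofReal_rpow_of_pos two_pos, ENNReal.ofReal_ofNat,
              ← ENNReal.rpow_mul, mul_one_div_cancel hp0.ne', ENNReal.rpow_one]
    · -- L² bound
      have hbound : ∀ x, (if K ≤ |f x / 2| then f x else 0) ^ 2
          ≤ 4 * K ^ (2 - p) * Gfun p K (f x / 2) := by
        intro x
        split_ifs with h
        · have hq := G_quad hp1 hK h
          have h4 : (f x) ^ 2 = 4 * (f x / 2) ^ 2 := by ring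
          rw [h4]
          nlinarith
        · simpa using mul_nonneg (by positivity : (0:ℝ) ≤ 4 * K ^ (2 - p))
            (G_nonneg hp1 hK (f x / 2))
      have hmeas2 : Measurable fun x => (if K ≤ |f x / 2| then f x else 0) ^ 2 := by
        apply Measurable.pow_const
        exact Measurable.ite (measurableSet_le measurable_const ((hmeas.div_const 2).abs))
          hmeas measurable_const
      have hint3 : Integrable (fun x => (if K ≤ |f x / 2| then f x else 0) ^ 2) μ := by
        apply hf2.mono' hmeas2.aestronglyMeasurable
        filter_upwards with x
        rw [Real.norm_eq_abs, abs_of_nonneg (sq_nonneg _)]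
        split_ifs with h
        · exact le_refl _
        · simpa using sq_nonneg (f x)
      calc ∫ x, (if K ≤ |f x / 2| then f x else 0) ^ 2 ∂μ
          ≤ ∫ x, 4 * K ^ (2 - p) * Gfun p K (f x / 2) ∂μ :=
            integral_mono hint3 (hGint2.const_mul _) hbound
        _ = 4 * K ^ (2 - p) * ∫ x, Gfun p K (f x / 2) ∂μ := integral_const_mul _ _
        _ ≤ 4 * K ^ (2 - p) * 1 := by
            apply mul_le_mul_of_nonneg_left hI1' (by positivity)
        _ = 4 * K ^ (2 - p) := mul_one _
  · -- degenerate case: contradiction with hnorm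
    exfalso
    have hnon : ∀ lam : ℝ, 0 < lam → ¬ Integrable (fun x => Γ (f x / lam)) μ := by
      intro lam hlam hint
      apply hf2
      simp only [hG] at hint
      have hgint : Integrable
          (fun x => (lam ^ 2 / ((1 + (p - 2) / 2) * K ^ (p - 2)))
            * (Gfun p K (f x / lam) + (1 + (p - 2) / 2) * K ^ p)) μ :=
        ((hint.add (integrable_const _)).const_mul _)
      apply hgint.mono' (hmeas.pow_const 2).aestronglyMeasurable
      filter_upwards with x
      rw [Real.norm_eq_abs, abs_of_nonneg (sq_nonneg _)]
      have hge := G_ge hp1 hK (f x / lam)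
      have hc : (0:ℝ) < 1 + (p - 2) / 2 := by linarith
      have hcK : (0:ℝ) < (1 + (p - 2) / 2) * K ^ (p - 2) := mul_pos hc hKp2
      have hdv : (f x / lam) ^ 2 = (f x) ^ 2 / lam ^ 2 := div_pow _ _ _
      rw [hdv] at hge
      have hl2 : (0:ℝ) < lam ^ 2 := by positivity
      have hmul := mul_le_mul_of_nonneg_right hge hl2.le
      have hcalc : ((1 + (p - 2) / 2) * K ^ (p - 2) * ((f x) ^ 2 / lam ^ 2)
            - (1 + (p - 2) / 2) * K ^ p) * lam ^ 2
          = (1 + (p - 2) / 2) * K ^ (p - 2) * (f x) ^ 2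
            - (1 + (p - 2) / 2) * K ^ p * lam ^ 2 := by
        field_simp
      rw [hcalc] at hmul
      rw [div_mul_eq_mul_div, le_div_iff₀ hcK]
      nlinarith [hmul]
    have hSeq : {lam : ℝ | 0 < lam ∧ ∫ x, Γ (f x / lam) ∂μ ≤ 1} = Set.Ioi 0 := by
      ext lam
      simp only [Set.mem_setOf_eq, Set.mem_Ioi]
      constructor
      · exact fun h => h.1
      · intro h
        refine ⟨h, ?_⟩
        rw [integral_undef (hnon lam h)]
        norm_num
    rw [hSeq, csInf_Ioi] at hnorm
    norm_num at hnorm
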